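/- arXiv:2312.17626 — 2 statements merged into one kernel-verified Lean document; each statement's English description precedes it below -/
import Mathlib

section
/- Let G be a tree graph and (r1,r2) an edge of G; removing this edge yields subtrees G1 (containing r1) and G2 (containing r2). Let M, M1, M2 be MECs of G, G1, G2 respectively. Then P(M, V_{G1}, V_{G2}) = (M1, M2) if and only if (1) every v-structure of M1 and every v-structure of M2 is a v-structure of M, and (2) either every v-structure of M that is a v-structure of neither M1 nor M2 contains the directed edge r1→r2, or every v-structure of M that is a v-structure of neither M1 nor M2 contains the directed edge r2→r1. -/
/-! Common definitions: mixed graphs, Markov equivalence classes (MECs),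
partial MECs, projections, extensions, and counting classes. -/

/-- A mixed graph on a vertex type `V`: an irreflexive edge relation. -/
structure MixedGraph (V : Type*) where
  E : V → V → Prop
  irrefl : ∀ v, ¬ E v v

namespace MixedGraph

variable {V : Type*}

/-- `u — v` : undirected edge of `M`. -/
def undirE (M : MixedGraph V) (u v : V) : Prop := M.E u v ∧ M.E v u

/-- `u → v` : directed edge of `M`. -/
def dirE (M : MixedGraph V) (u v : V) : Prop := M.E u v ∧ ¬ M.E v u

/-- `u` and `v` are adjacent in `M` (joined by some edge). -/
def adjE (M : MixedGraph V) (u v : V) : Prop := M.E u v ∨ M.E v u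

/-- The skeleton of a mixed graph: replace every directed edge by an undirected one. -/
def skeleton (M : MixedGraph V) : SimpleGraph V where
  Adj u v := M.adjE u v
  symm := by
    constructor
    intro u v h
    exact Or.symm h
  loopless := by
    constructor
    intro v h
    rcases h with h | h <;> exact M.irrefl v h

/-- The undirected part of a mixed graph, as a simple graph. -/
def undirGraph (M : MixedGraph V) : SimpleGraph V where
  Adj u v := M.undirE u v
  symm := by
    constructor
    intro u v h
    exact ⟨h.2, h.1⟩
  loopless := by
    constructor
    intro v h
    exact M.irrefl v h.1

/-- `M` is a chain graph: no directed cycle, i.e. no cycle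
`u_1, …, u_l, u_1` (`l ≥ 2`, vertices distinct) in which every consecutive pair is joined
by an undirected or forward-directed edge and at least one edge is directed. -/
def IsChainGraph (M : MixedGraph V) : Prop :=
  ∀ (l : ℕ) (f : ZMod l → V), 2 ≤ l → Function.Injective f →
    (∀ i, M.E (f i) (f (i + 1))) → ∀ i, ¬ M.dirE (f i) (f (i + 1))

/-- `a → b ← c` is a v-structure of `M` (in particular `a`, `c` non-adjacent). -/
def vstruct (M : MixedGraph V) (a b c : V) : Prop :=
  M.dirE a b ∧ M.dirE c b ∧ ¬ M.adjE a c

/-- The set of v-structures of `M`, as ordered triples `(a, b, c)` with `a → b ← c`. -/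
def vstructs (M : MixedGraph V) : Set (V × V × V) :=
  {t | M.vstruct t.1 t.2.1 t.2.2}

/-- The directed edge `u → v` is strongly protected in `M`: it occurs in an induced
subgraph of one of the four forms (a) `w→u→v` (`w`,`v` non-adjacent);
(b) `u→v←w` (`u`,`w` non-adjacent); (c) `u→w`, `w→v`, `u→v`;
(d) `w→v`, `w'→v`, `w—u`, `w'—u`, `u→v` (`w`,`w'` non-adjacent). -/
def StronglyProtected (M : MixedGraph V) (u v : V) : Prop :=
  (∃ w, M.dirE w u ∧ ¬ M.adjE w v) ∨
  (∃ w, M.dirE w v ∧ ¬ M.adjE u w) ∨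
  (∃ w, M.dirE u w ∧ M.dirE w v) ∨
  (∃ w w', w ≠ w' ∧ M.undirE w u ∧ M.undirE w' u ∧ M.dirE w v ∧ M.dirE w' v ∧
    ¬ M.adjE w w')

/-- The induced mixed subgraph of `M` on the vertex set `X`, kept on the same vertex
type (vertices outside `X` become isolated). -/
def induce (M : MixedGraph V) (X : Set V) : MixedGraph V where
  E u v := u ∈ X ∧ v ∈ X ∧ M.E u v
  irrefl := by
    intro v h
    exact M.irrefl v h.2.2

end MixedGraph

namespace SimpleGraph

variable {V : Type*}

/-- A simple graph is chordal: every cycle of length at least `4` has a chord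
(an edge between two non-consecutive vertices of the cycle). -/
def IsChordalGraph (G : SimpleGraph V) : Prop :=
  ∀ (l : ℕ) (f : ZMod l → V), 4 ≤ l → Function.Injective f →
    (∀ i, G.Adj (f i) (f (i + 1))) →
    ∃ i j : ZMod l, j ≠ i + 1 ∧ i ≠ j + 1 ∧ G.Adj (f i) (f j)

/-- The induced subgraph of `G` on the vertex set `X`, kept on the same vertex type
(vertices outside `X` become isolated). -/
def inducedOn (G : SimpleGraph V) (X : Set V) : SimpleGraph V where
  Adj u v := u ∈ X ∧ v ∈ X ∧ G.Adj u v
  symm := by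
    constructor
    intro u v h
    exact ⟨h.2.1, h.1, h.2.2.symm⟩
  loopless := by
    constructor
    intro v h
    exact G.loopless.irrefl v h.2.2

/-- The set of neighbours in `G` of vertices of `S`. -/
def nbhdSet (G : SimpleGraph V) (S : Set V) : Set V :=
  {v | ∃ u ∈ S, G.Adj u v}

/-- View an undirected graph as a mixed graph all of whose edges are undirected. -/
def toMixed (G : SimpleGraph V) : MixedGraph V :=
  ⟨G.Adj, fun v h => G.loopless.irrefl v h⟩

end SimpleGraph

namespace MixedGraph

variable {V : Type*}

/-- `M` is (the graphical representation of) a Markov equivalence class, by the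
Andersson–Madigan–Perlman characterization: (1) `M` is a chain graph; (2) every
undirected connected component of `M` is chordal; (3) `M` has no induced subgraph
`a→b—c`; (4) every directed edge of `M` is strongly protected. -/
def IsMEC (M : MixedGraph V) : Prop :=
  M.IsChainGraph ∧
  M.undirGraph.IsChordalGraph ∧
  (∀ a b c, M.dirE a b → M.undirE b c → M.adjE a c) ∧
  (∀ u v, M.dirE u v → M.StronglyProtected u v)

/-- `M` is a partial MEC: conditions (1)–(3) of the MEC characterization. -/
def IsPartialMEC (M : MixedGraph V) : Prop :=
  M.IsChainGraph ∧
  M.undirGraph.IsChordalGraph ∧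
  (∀ a b c, M.dirE a b → M.undirE b c → M.adjE a c)

end MixedGraph

/-- `MEC(G)` : the set of MECs with skeleton `G`. -/
def MECset {V : Type*} (G : SimpleGraph V) : Set (MixedGraph V) :=
  {M | M.IsMEC ∧ M.skeleton = G}

/-- `PMEC(G)` : the set of partial MECs with skeleton `G`. -/
def PMECset {V : Type*} (G : SimpleGraph V) : Set (MixedGraph V) :=
  {M | M.IsPartialMEC ∧ M.skeleton = G}

/-- `M' = P(M, Y)` : `M'` is the projection of `M` on the vertex set `Y`, i.e. the
(unique) MEC of the induced subgraph on `Y` whose set of v-structures equals that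
of `M[Y]`. -/
def IsProjection {V : Type*} (M : MixedGraph V) (Y : Set V) (M' : MixedGraph V) : Prop :=
  M' ∈ MECset (M.skeleton.inducedOn Y) ∧ M'.vstructs = (M.induce Y).vstructs

/-- `MEC(G, r, 1)` : MECs of `G` that contain a directed edge into `r`. -/
def MEC1 {V : Type*} (G : SimpleGraph V) (r : V) : Set (MixedGraph V) :=
  {M ∈ MECset G | ∃ x, M.dirE x r}

/-- `MEC(G, r, 0, i)` : MECs of `G` with no directed edge into `r` and exactly `i`
undirected edges incident to `r`. -/
def MEC0 {V : Type*} (G : SimpleGraph V) (r : V) (i : ℕ) : Set (MixedGraph V) :=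
  {M ∈ MECset G | (¬ ∃ x, M.dirE x r) ∧ {x | M.undirE r x}.ncard = i}

/-- The degree of `r` in `G`. -/
noncomputable def degS {V : Type*} (G : SimpleGraph V) (r : V) : ℕ :=
  {x | G.Adj r x}.ncard

/-- `n_1(G, r) = |MEC(G, r, 1)|`. -/
noncomputable def n1count {V : Type*} (G : SimpleGraph V) (r : V) : ℕ :=
  (MEC1 G r).ncard

/-- `n_0^i(G, r) = |MEC(G, r, 0, i)|`. -/
noncomputable def n0count {V : Type*} (G : SimpleGraph V) (r : V) (i : ℕ) : ℕ :=
  (MEC0 G r i).ncard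

/-- `n_0(G, r) = Σ_{i = 0}^{δ} n_0^i(G, r)`, where `δ` is the degree of `r` in `G`. -/
noncomputable def n0total {V : Type*} (G : SimpleGraph V) (r : V) : ℕ :=
  ∑ i ∈ Finset.range (degS G r + 1), n0count G r i

/-- The set of vertices lying on the `r1` side after cutting the edge `r1 — r2` of `G`
(i.e. the vertices reachable from `r1` in `G` with the edge `r1 — r2` deleted). -/
def cutSide {V : Type*} (G : SimpleGraph V) (r1 r2 : V) : Set V :=
  {v | (G.deleteEdges {s(r1, r2)}).Reachable r1 v}

/-- `MEC(G, O)` : the MECs of `G` whose induced subgraph on `X` (the vertex set of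
`O`) equals `O`. -/
def MECwith {V : Type*} (G : SimpleGraph V) (O : MixedGraph V) (X : Set V) :
    Set (MixedGraph V) :=
  {M ∈ MECset G | M.induce X = O}

/-- `O ∈ E(O1, O2)` : `O` is an extension of `(O1, O2)` (where `X1`, `X2` are the
vertex sets of `O1`, `O2`): for each `a ∈ {1,2}`, (i) every directed edge of `O_a` is a
directed edge of `O`; (ii) `V(O_a) = V(O[V_{O_a}])`; (iii) every undirected edge of
`O_a` that is directed in `O` is strongly protected in `O`. -/
def IsExtension {V : Type*} (O O1 O2 : MixedGraph V) (X1 X2 : Set V) : Prop :=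
  (∀ u v, O1.dirE u v → O.dirE u v) ∧
  (∀ u v, O2.dirE u v → O.dirE u v) ∧
  O1.vstructs = (O.induce X1).vstructs ∧
  O2.vstructs = (O.induce X2).vstructs ∧
  (∀ u v, O1.undirE u v → O.dirE u v → O.StronglyProtected u v) ∧
  (∀ u v, O2.undirE u v → O.dirE u v → O.StronglyProtected u v)

/-- The v-structure (recorded as the ordered triple `t = (a, b, c)` with `a → b ← c`)
contains the directed edge `x → y`. -/
def vstructContains {V : Type*} (t : V × V × V) (x y : V) : Prop :=
  (t.1 = x ∧ t.2.1 = y) ∨ (t.2.2 = x ∧ t.2.1 = y)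


/-- v-structures of an induced mixed graph are the v-structures of `M` whose
vertices all lie in `Y`. -/
lemma induce_vstructs_mem {V : Type*} (M : MixedGraph V) (Y : Set V) (t : V × V × V) :
    t ∈ (M.induce Y).vstructs ↔ t.1 ∈ Y ∧ t.2.1 ∈ Y ∧ t.2.2 ∈ Y ∧ t ∈ M.vstructs := by
  obtain ⟨a, b, c⟩ := t
  simp only [MixedGraph.vstructs, Set.mem_setOf_eq, MixedGraph.vstruct, MixedGraph.dirE,
    MixedGraph.adjE, MixedGraph.induce]
  tauto

lemma mem_cutSide_self {V : Type*} (G : SimpleGraph V) (a b : V) : a ∈ cutSide G a b :=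
  SimpleGraph.Reachable.refl a

/-- In a tree, the two sides of a cut edge are disjoint. -/
lemma cutSide_disjoint {V : Type*} (G : SimpleGraph V) (hT : G.IsTree) (r1 r2 : V)
    (hadj : G.Adj r1 r2) (v : V) (h1 : v ∈ cutSide G r1 r2) (h2 : v ∈ cutSide G r2 r1) :
    False := by
  have hb : G.IsBridge s(r1, r2) :=
    (SimpleGraph.isAcyclic_iff_forall_adj_isBridge.mp hT.IsAcyclic) hadj
  rw [SimpleGraph.isBridge_iff] at hb
  apply hb
  have h2' : (G.deleteEdges {s(r1, r2)}).Reachable r2 v := by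
    have : s(r2, r1) = s(r1, r2) := Sym2.eq_swap
    simpa [cutSide, this] using h2
  exact (h1.trans h2'.symm : (G.deleteEdges {s(r1, r2)}).Reachable r1 r2)

/-- Walking along `G` preserves membership in the union of the two cut sides. -/
lemma cutSide_walk {V : Type*} [DecidableEq V] (G : SimpleGraph V) (r1 r2 : V) :
    ∀ (u v : V) (_ : G.Walk u v),
      (u ∈ cutSide G r1 r2 ∨ u ∈ cutSide G r2 r1) →
      (v ∈ cutSide G r1 r2 ∨ v ∈ cutSide G r2 r1) := by
  intro u v p
  induction p with
  | nil => exact id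
  | @cons u w v h p ih =>
      intro hu
      apply ih
      by_cases he : s(u, w) = s(r1, r2)
      · rcases Sym2.eq_iff.mp he with ⟨rfl, rfl⟩ | ⟨rfl, rfl⟩
        · exact Or.inr (mem_cutSide_self G _ _)
        · exact Or.inl (mem_cutSide_self G _ _)
      · have h1 : (G.deleteEdges {s(r1, r2)}).Adj u w := by
          simp [SimpleGraph.deleteEdges_adj, h, he]
        have h2 : (G.deleteEdges {s(r2, r1)}).Adj u w := by
          have : s(r2, r1) = s(r1, r2) := Sym2.eq_swap
          rw [this]
          exact h1
        rcases hu with hu | hu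
        · exact Or.inl (hu.trans h1.reachable)
        · exact Or.inr (hu.trans h2.reachable)

/-- In a connected graph, every vertex lies on one of the two cut sides. -/
lemma cutSide_union {V : Type*} [DecidableEq V] (G : SimpleGraph V) (hT : G.IsTree)
    (r1 r2 : V) (v : V) : v ∈ cutSide G r1 r2 ∨ v ∈ cutSide G r2 r1 := by
  obtain ⟨p⟩ := hT.isConnected.preconnected r1 v
  exact cutSide_walk G r1 r2 r1 v p (Or.inl (mem_cutSide_self G r1 r2))

/-- Every edge of `G` lies within one cut side, or is the cut edge itself. -/
lemma cutSide_trichotomy {V : Type*} [DecidableEq V] (G : SimpleGraph V) (hT : G.IsTree)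
    (r1 r2 : V) {u w : V} (h : G.Adj u w) :
    (u ∈ cutSide G r1 r2 ∧ w ∈ cutSide G r1 r2) ∨
    (u ∈ cutSide G r2 r1 ∧ w ∈ cutSide G r2 r1) ∨ s(u, w) = s(r1, r2) := by
  by_cases he : s(u, w) = s(r1, r2)
  · exact Or.inr (Or.inr he)
  · have h1 : (G.deleteEdges {s(r1, r2)}).Adj u w := by
      simp [SimpleGraph.deleteEdges_adj, h, he]
    have h2 : (G.deleteEdges {s(r2, r1)}).Adj u w := by
      have : s(r2, r1) = s(r1, r2) := Sym2.eq_swap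
      rw [this]; exact h1
    rcases cutSide_union G hT r1 r2 u with hu | hu
    · exact Or.inl ⟨hu, hu.trans h1.reachable⟩
    · exact Or.inr (Or.inl ⟨hu, hu.trans h2.reachable⟩)

theorem projection_iff_vstructures {V : Type*} [Fintype V] [DecidableEq V]
    (G : SimpleGraph V) (hT : G.IsTree) (r1 r2 : V) (hadj : G.Adj r1 r2)
    (V1 V2 : Set V) (hV1 : V1 = cutSide G r1 r2) (hV2 : V2 = cutSide G r2 r1)
    (G1 G2 : SimpleGraph V) (hG1 : G1 = G.inducedOn V1) (hG2 : G2 = G.inducedOn V2)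
    (M M1 M2 : MixedGraph V)
    (hM : M ∈ MECset G) (hM1 : M1 ∈ MECset G1) (hM2 : M2 ∈ MECset G2) :
    (IsProjection M V1 M1 ∧ IsProjection M V2 M2) ↔
      (M1.vstructs ∪ M2.vstructs ⊆ M.vstructs ∧
        ((∀ t ∈ M.vstructs, t ∉ M1.vstructs → t ∉ M2.vstructs →
            vstructContains t r1 r2) ∨
          (∀ t ∈ M.vstructs, t ∉ M1.vstructs → t ∉ M2.vstructs →
            vstructContains t r2 r1))) := by
  obtain ⟨hMmec, hMsk⟩ := hM
  obtain ⟨hM1mec, hM1sk⟩ := hM1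
  obtain ⟨hM2mec, hM2sk⟩ := hM2
  have hr1 : r1 ∈ V1 := by rw [hV1]; exact mem_cutSide_self G r1 r2
  have hr2 : r2 ∈ V2 := by rw [hV2]; exact mem_cutSide_self G r2 r1
  have hdisj : ∀ v, v ∈ V1 → v ∈ V2 → False := by
    intro v h1 h2
    rw [hV1] at h1; rw [hV2] at h2
    exact cutSide_disjoint G hT r1 r2 hadj v h1 h2
  have hM1mem : ∀ {a b : V}, M1.E a b → a ∈ V1 ∧ b ∈ V1 := by
    intro a b h
    have hA : G1.Adj a b := by rw [← hM1sk]; exact Or.inl h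
    rw [hG1] at hA
    exact ⟨hA.1, hA.2.1⟩
  have hM2mem : ∀ {a b : V}, M2.E a b → a ∈ V2 ∧ b ∈ V2 := by
    intro a b h
    have hA : G2.Adj a b := by rw [← hM2sk]; exact Or.inl h
    rw [hG2] at hA
    exact ⟨hA.1, hA.2.1⟩
  have hvs1 : ∀ t : V × V × V, t ∈ M1.vstructs → t.1 ∈ V1 ∧ t.2.1 ∈ V1 ∧ t.2.2 ∈ V1 := by
    rintro ⟨a, b, c⟩ ⟨hab, hcb, -⟩
    exact ⟨(hM1mem hab.1).1, (hM1mem hab.1).2, (hM1mem hcb.1).1⟩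
  have hvs2 : ∀ t : V × V × V, t ∈ M2.vstructs → t.1 ∈ V2 ∧ t.2.1 ∈ V2 ∧ t.2.2 ∈ V2 := by
    rintro ⟨a, b, c⟩ ⟨hab, hcb, -⟩
    exact ⟨(hM2mem hab.1).1, (hM2mem hab.1).2, (hM2mem hcb.1).1⟩
  have hMadj : ∀ {a b : V}, M.E a b → G.Adj a b := by
    intro a b h; rw [← hMsk]; exact Or.inl h
  have htri : ∀ {u w : V}, G.Adj u w →
      (u ∈ V1 ∧ w ∈ V1) ∨ (u ∈ V2 ∧ w ∈ V2) ∨ s(u, w) = s(r1, r2) := by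
    intro u w h
    rw [hV1, hV2]
    exact cutSide_trichotomy G hT r1 r2 h
  have hproj1 : IsProjection M V1 M1 ↔ M1.vstructs = (M.induce V1).vstructs := by
    constructor
    · exact fun h => h.2
    · intro h
      refine ⟨?_, h⟩
      rw [hMsk, ← hG1]
      exact ⟨hM1mec, hM1sk⟩
  have hproj2 : IsProjection M V2 M2 ↔ M2.vstructs = (M.induce V2).vstructs := by
    constructor
    · exact fun h => h.2
    · intro h
      refine ⟨?_, h⟩
      rw [hMsk, ← hG2]
      exact ⟨hM2mec, hM2sk⟩
  rw [hproj1, hproj2]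
  constructor
  · rintro ⟨h1, h2⟩
    constructor
    · rintro t (ht | ht)
      · exact ((induce_vstructs_mem M V1 t).mp (h1 ▸ ht)).2.2.2
      · exact ((induce_vstructs_mem M V2 t).mp (h2 ▸ ht)).2.2.2
    · -- key: any v-structure of M in neither M1 nor M2 uses the cut edge
      have hkey : ∀ t : V × V × V, t ∈ M.vstructs → t ∉ M1.vstructs → t ∉ M2.vstructs →
          (M.dirE t.1 t.2.1 ∧ s(t.1, t.2.1) = s(r1, r2)) ∨
          (M.dirE t.2.2 t.2.1 ∧ s(t.2.2, t.2.1) = s(r1, r2)) := by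
        rintro ⟨a, b, c⟩ ht ht1 ht2
        obtain ⟨hab, hcb, hnac⟩ := ht
        rcases htri (hMadj hab.1) with ⟨ha, hb⟩ | ⟨ha, hb⟩ | he
        · rcases htri (hMadj hcb.1) with ⟨hc, hb'⟩ | ⟨hc, hb'⟩ | he'
          · exact absurd (h1 ▸ (induce_vstructs_mem M V1 (a, b, c)).mpr
              ⟨ha, hb, hc, hab, hcb, hnac⟩) ht1
          · exact absurd (hdisj b hb hb') id
          · exact Or.inr ⟨hcb, he'⟩
        · rcases htri (hMadj hcb.1) with ⟨hc, hb'⟩ | ⟨hc, hb'⟩ | he'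
          · exact absurd (hdisj b hb' hb) id
          · exact absurd (h2 ▸ (induce_vstructs_mem M V2 (a, b, c)).mpr
              ⟨ha, hb, hc, hab, hcb, hnac⟩) ht2
          · exact Or.inr ⟨hcb, he'⟩
        · exact Or.inl ⟨hab, he⟩
      by_cases hE : M.E r2 r1
      · refine Or.inr ?_
        intro t ht ht1 ht2
        rcases hkey t ht ht1 ht2 with ⟨hd, he⟩ | ⟨hd, he⟩
        · rcases Sym2.eq_iff.mp he with ⟨h, h'⟩ | ⟨h, h'⟩
          · exact absurd hE (by rw [← h, ← h'] at hE ⊢; exact hd.2)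
          · exact Or.inl ⟨h, h'⟩
        · rcases Sym2.eq_iff.mp he with ⟨h, h'⟩ | ⟨h, h'⟩
          · exact absurd hE (by rw [← h, ← h'] at hE ⊢; exact hd.2)
          · exact Or.inr ⟨h, h'⟩
      · refine Or.inl ?_
        intro t ht ht1 ht2
        rcases hkey t ht ht1 ht2 with ⟨hd, he⟩ | ⟨hd, he⟩
        · rcases Sym2.eq_iff.mp he with ⟨h, h'⟩ | ⟨h, h'⟩
          · exact Or.inl ⟨h, h'⟩
          · exact absurd (by rw [h, h'] at hd; exact hd.1) hE
        · rcases Sym2.eq_iff.mp he with ⟨h, h'⟩ | ⟨h, h'⟩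
          · exact Or.inr ⟨h, h'⟩
          · exact absurd (by rw [h, h'] at hd; exact hd.1) hE
  · rintro ⟨hsub, hor⟩
    constructor
    · ext t
      constructor
      · intro ht
        obtain ⟨ha, hb, hc⟩ := hvs1 t ht
        exact (induce_vstructs_mem M V1 t).mpr ⟨ha, hb, hc, hsub (Or.inl ht)⟩
      · intro ht
        obtain ⟨ha, hb, hc, htM⟩ := (induce_vstructs_mem M V1 t).mp ht
        by_contra ht1
        have ht2 : t ∉ M2.vstructs := fun h2 => hdisj _ hb (hvs2 t h2).2.1
        rcases hor with hor | hor
        · rcases hor t htM ht1 ht2 with ⟨h, h'⟩ | ⟨h, h'⟩ <;>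
            exact hdisj r2 (by rw [← h']; exact hb) hr2
        · rcases hor t htM ht1 ht2 with ⟨h, h'⟩ | ⟨h, h'⟩
          · exact hdisj r2 (by rw [← h]; exact ha) hr2
          · exact hdisj r2 (by rw [← h]; exact hc) hr2
    · ext t
      constructor
      · intro ht
        obtain ⟨ha, hb, hc⟩ := hvs2 t ht
        exact (induce_vstructs_mem M V2 t).mpr ⟨ha, hb, hc, hsub (Or.inr ht)⟩
      · intro ht
        obtain ⟨ha, hb, hc, htM⟩ := (induce_vstructs_mem M V2 t).mp ht
        by_contra ht2
        have ht1 : t ∉ M1.vstructs := fun h1 => hdisj _ (hvs1 t h1).2.1 hb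
        rcases hor with hor | hor
        · rcases hor t htM ht1 ht2 with ⟨h, h'⟩ | ⟨h, h'⟩
          · exact hdisj r1 hr1 (by rw [← h]; exact ha)
          · exact hdisj r1 hr1 (by rw [← h]; exact hc)
        · rcases hor t htM ht1 ht2 with ⟨h, h'⟩ | ⟨h, h'⟩ <;>
            exact hdisj r1 hr1 (by rw [← h']; exact hb)
end

section
/- Let G1 be a chordal undirected graph, let r1 be a clique of G1, and let P = (u_0 = x, u_1, …, u_l = y) be a chordless path in G1 with l ≥ 2 such that x, y ∈ r1 ∪ N(r1,G1). Then every node of P lies in r1 ∪ N(r1,G1). -/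
private lemma no_induced_cycle {V : Type*} (G : SimpleGraph V) (hch : G.IsChordalGraph)
    (n : ℕ) (hn : 4 ≤ n) (g : ℕ → V)
    (ginj : ∀ a b, a < n → b < n → g a = g b → a = b)
    (gadj : ∀ a, a + 1 < n → G.Adj (g a) (g (a + 1)))
    (gadj' : G.Adj (g (n - 1)) (g 0))
    (gind : ∀ a b, a < n → b < n → G.Adj (g a) (g b) →
      b = a + 1 ∨ a = b + 1 ∨ (a = 0 ∧ b = n - 1) ∨ (b = 0 ∧ a = n - 1)) :
    False := by
  haveI : NeZero n := ⟨by omega⟩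
  haveI : Fact (1 < n) := ⟨by omega⟩
  have hvlt : ∀ z : ZMod n, z.val < n := fun z => ZMod.val_lt z
  have hsucc : ∀ z : ZMod n, (z + 1).val = (z.val + 1) % n := by
    intro z
    rw [ZMod.val_add, ZMod.val_one]
  have finj : Function.Injective (fun z : ZMod n => g z.val) := by
    intro a b h
    exact ZMod.val_injective n (ginj a.val b.val (hvlt a) (hvlt b) h)
  have fadj : ∀ z : ZMod n, G.Adj (g z.val) (g (z + 1).val) := by
    intro z
    rw [hsucc]
    by_cases h : z.val + 1 < n
    · rw [Nat.mod_eq_of_lt h]; exact gadj z.val h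
    · have h1 : z.val = n - 1 := by have := hvlt z; omega
      have h2 : (z.val + 1) % n = 0 := by
        rw [h1, Nat.sub_add_cancel (by omega), Nat.mod_self]
      rw [h2, h1]; exact gadj'
  obtain ⟨zi, zj, h1, h2, h3⟩ := hch n (fun z => g z.val) hn finj fadj
  have hvi := hvlt zi
  have hvj := hvlt zj
  rcases gind zi.val zj.val hvi hvj h3 with h | h | ⟨ha, hb⟩ | ⟨ha, hb⟩
  · exact h1 (ZMod.val_injective n
      (show zj.val = (zi + 1).val by rw [hsucc, Nat.mod_eq_of_lt (by omega)]; omega))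
  · exact h2 (ZMod.val_injective n
      (show zi.val = (zj + 1).val by rw [hsucc, Nat.mod_eq_of_lt (by omega)]; omega))
  · exact h2 (ZMod.val_injective n
      (show zi.val = (zj + 1).val by
        rw [hsucc, hb, Nat.sub_add_cancel (by omega), Nat.mod_self, ha]))
  · exact h1 (ZMod.val_injective n
      (show zj.val = (zi + 1).val by
        rw [hsucc, hb, Nat.sub_add_cancel (by omega), Nat.mod_self, ha]))

private lemma aux_case1 {V : Type*} (G1 : SimpleGraph V) (hch : G1.IsChordalGraph)
    (r1 : Set V) (v : ℕ → V) (i j l : ℕ) (hij : i + 2 ≤ j) (hjl : j ≤ l)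
    (hvinj : ∀ a b, a ≤ l → b ≤ l → v a = v b → a = b)
    (hvadj : ∀ a, a + 1 ≤ l → G1.Adj (v a) (v (a + 1)))
    (hvchord : ∀ a b, a + 1 < b → b ≤ l → ¬ G1.Adj (v a) (v b))
    (hmid : ∀ m, i < m → m < j → v m ∉ r1 ∧ ∀ u ∈ r1, ¬ G1.Adj u (v m))
    (c : V) (hc : c ∈ r1) (hci : G1.Adj c (v i)) (hcj : G1.Adj c (v j)) : False := by
  have hd : i + (j - i) = j := by omega
  set d := j - i with hdd
  have hd2 : 2 ≤ d := by omega
  have hcne : ∀ m, m ≤ d → v (i + m) ≠ c := by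
    intro m hm he
    rcases Nat.eq_zero_or_pos m with h0 | h0
    · subst h0; rw [Nat.add_zero] at he; exact G1.loopless.irrefl c (he ▸ hci)
    rcases eq_or_lt_of_le hm with h5 | h5
    · subst h5; rw [hd] at he; exact G1.loopless.irrefl c (he ▸ hcj)
    · exact (hmid (i + m) (by omega) (by omega)).1 (he ▸ hc)
  refine no_induced_cycle G1 hch (d + 2) (by omega)
    (fun m => if m ≤ d then v (i + m) else c) ?_ ?_ ?_ ?_
  · intro a b ha hb hab
    by_cases h1 : a ≤ d <;> by_cases h2 : b ≤ d
    · rw [if_pos h1, if_pos h2] at hab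
      have := hvinj (i + a) (i + b) (by omega) (by omega) hab
      omega
    · rw [if_pos h1, if_neg h2] at hab
      exact absurd hab (hcne a h1)
    · rw [if_neg h1, if_pos h2] at hab
      exact absurd hab.symm (hcne b h2)
    · omega
  · intro a ha
    by_cases h1 : a + 1 ≤ d
    · rw [if_pos (by omega : a ≤ d), if_pos h1]
      exact hvadj (i + a) (by omega)
    · have h2 : a = d := by omega
      subst h2
      rw [if_pos le_rfl, if_neg (by omega), hd]
      exact hcj.symm
  · rw [if_neg (by omega : ¬ (d + 2 - 1 ≤ d)), if_pos (Nat.zero_le d)]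
    exact hci
  · intro a b ha hb hadj
    by_cases h1 : a ≤ d <;> by_cases h2 : b ≤ d
    · rw [if_pos h1, if_pos h2] at hadj
      have hne : a ≠ b := by
        intro h; rw [h] at hadj; exact G1.loopless.irrefl _ hadj
      by_cases h3 : a + 1 < b
      · exact absurd hadj (hvchord (i + a) (i + b) (by omega) (by omega))
      by_cases h4 : b + 1 < a
      · exact absurd hadj.symm (hvchord (i + b) (i + a) (by omega) (by omega))
      omega
    · rw [if_pos h1, if_neg h2] at hadj
      rcases Nat.eq_zero_or_pos a with h0 | h0
      · omega
      rcases eq_or_lt_of_le h1 with h5 | h5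
      · omega
      · exact absurd hadj.symm ((hmid (i + a) (by omega) (by omega)).2 c hc)
    · rw [if_neg h1, if_pos h2] at hadj
      rcases Nat.eq_zero_or_pos b with h0 | h0
      · omega
      rcases eq_or_lt_of_le h2 with h5 | h5
      · omega
      · exact absurd hadj ((hmid (i + b) (by omega) (by omega)).2 c hc)
    · have h : a = b := by omega
      rw [h] at hadj
      exact absurd hadj (G1.loopless.irrefl _)

private lemma aux_case2 {V : Type*} (G1 : SimpleGraph V) (hch : G1.IsChordalGraph)
    (r1 : Set V) (v : ℕ → V) (i j l : ℕ) (hij : i + 2 ≤ j) (hjl : j ≤ l)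
    (hvinj : ∀ a b, a ≤ l → b ≤ l → v a = v b → a = b)
    (hvadj : ∀ a, a + 1 ≤ l → G1.Adj (v a) (v (a + 1)))
    (hvchord : ∀ a b, a + 1 < b → b ≤ l → ¬ G1.Adj (v a) (v b))
    (hmid : ∀ m, i < m → m < j → v m ∉ r1 ∧ ∀ u ∈ r1, ¬ G1.Adj u (v m))
    (a0 b0 : V) (ha0 : a0 ∈ r1) (hb0 : b0 ∈ r1) (hne : a0 ≠ b0)
    (hai : G1.Adj a0 (v i)) (hbj : G1.Adj b0 (v j))
    (haj : ¬ G1.Adj a0 (v j)) (hbi : ¬ G1.Adj b0 (v i))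
    (hir : v i ∉ r1) (hjr : v j ∉ r1) (hab : G1.Adj a0 b0) : False := by
  have hd : i + (j - i) = j := by omega
  set d := j - i with hdd
  have hd2 : 2 ≤ d := by omega
  have hbne : ∀ m, m ≤ d → v (i + m) ≠ b0 := by
    intro m hm he
    rcases Nat.eq_zero_or_pos m with h0 | h0
    · subst h0; rw [Nat.add_zero] at he; exact hir (he ▸ hb0)
    rcases eq_or_lt_of_le hm with h5 | h5
    · subst h5; rw [hd] at he; exact G1.loopless.irrefl b0 (he ▸ hbj)
    · exact (hmid (i + m) (by omega) (by omega)).1 (he ▸ hb0)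
  have hane : ∀ m, m ≤ d → v (i + m) ≠ a0 := by
    intro m hm he
    rcases Nat.eq_zero_or_pos m with h0 | h0
    · subst h0; rw [Nat.add_zero] at he; exact G1.loopless.irrefl a0 (he ▸ hai)
    rcases eq_or_lt_of_le hm with h5 | h5
    · subst h5; rw [hd] at he; exact hjr (he ▸ ha0)
    · exact (hmid (i + m) (by omega) (by omega)).1 (he ▸ ha0)
  refine no_induced_cycle G1 hch (d + 3) (by omega)
    (fun m => if m ≤ d then v (i + m) else if m = d + 1 then b0 else a0) ?_ ?_ ?_ ?_
  · intro a b ha hb hab'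
    by_cases h1 : a ≤ d <;> by_cases h2 : b ≤ d
    · rw [if_pos h1, if_pos h2] at hab'
      have := hvinj (i + a) (i + b) (by omega) (by omega) hab'
      omega
    · rw [if_pos h1, if_neg h2] at hab'
      by_cases h3 : b = d + 1
      · rw [if_pos h3] at hab'; exact absurd hab' (hbne a h1)
      · rw [if_neg h3] at hab'; exact absurd hab' (hane a h1)
    · rw [if_neg h1, if_pos h2] at hab'
      by_cases h3 : a = d + 1
      · rw [if_pos h3] at hab'; exact absurd hab'.symm (hbne b h2)
      · rw [if_neg h3] at hab'; exact absurd hab'.symm (hane b h2)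
    · by_cases h3 : a = d + 1 <;> by_cases h4 : b = d + 1
      · omega
      · rw [if_neg h1, if_neg h2, if_pos h3, if_neg h4] at hab'
        exact absurd hab'.symm hne
      · rw [if_neg h1, if_neg h2, if_neg h3, if_pos h4] at hab'
        exact absurd hab' hne
      · omega
  · intro a ha
    by_cases h1 : a + 1 ≤ d
    · rw [if_pos (by omega : a ≤ d), if_pos h1]
      exact hvadj (i + a) (by omega)
    by_cases h2 : a = d
    · subst h2
      rw [if_pos le_rfl, if_neg (by omega : ¬ (d + 1 ≤ d)),
        if_pos rfl, hd]
      exact hbj.symm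
    · have h3 : a = d + 1 := by omega
      subst h3
      rw [if_neg (by omega : ¬ (d + 1 ≤ d)), if_pos rfl,
        if_neg (by omega : ¬ (d + 1 + 1 ≤ d)), if_neg (by omega : ¬ (d + 1 + 1 = d + 1))]
      exact hab.symm
  · rw [if_neg (by omega : ¬ (d + 3 - 1 ≤ d)), if_neg (by omega : ¬ (d + 3 - 1 = d + 1)),
      if_pos (Nat.zero_le d)]
    exact hai
  · intro a b ha hb hadj
    by_cases h1 : a ≤ d <;> by_cases h2 : b ≤ d
    · rw [if_pos h1, if_pos h2] at hadj
      have hne' : a ≠ b := by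
        intro h; rw [h] at hadj; exact G1.loopless.irrefl _ hadj
      by_cases h3 : a + 1 < b
      · exact absurd hadj (hvchord (i + a) (i + b) (by omega) (by omega))
      by_cases h4 : b + 1 < a
      · exact absurd hadj.symm (hvchord (i + b) (i + a) (by omega) (by omega))
      omega
    · rw [if_pos h1, if_neg h2] at hadj
      by_cases h3 : b = d + 1
      · rw [if_pos h3] at hadj
        rcases Nat.eq_zero_or_pos a with h0 | h0
        · subst h0; rw [Nat.add_zero] at hadj; exact absurd hadj.symm hbi
        rcases eq_or_lt_of_le h1 with h5 | h5
        · omega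
        · exact absurd hadj.symm ((hmid (i + a) (by omega) (by omega)).2 b0 hb0)
      · rw [if_neg h3] at hadj
        rcases Nat.eq_zero_or_pos a with h0 | h0
        · omega
        rcases eq_or_lt_of_le h1 with h5 | h5
        · subst h5; rw [hd] at hadj; exact absurd hadj.symm haj
        · exact absurd hadj.symm ((hmid (i + a) (by omega) (by omega)).2 a0 ha0)
    · rw [if_neg h1, if_pos h2] at hadj
      by_cases h3 : a = d + 1
      · rw [if_pos h3] at hadj
        rcases Nat.eq_zero_or_pos b with h0 | h0
        · subst h0; rw [Nat.add_zero] at hadj; exact absurd hadj hbi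
        rcases eq_or_lt_of_le h2 with h5 | h5
        · omega
        · exact absurd hadj ((hmid (i + b) (by omega) (by omega)).2 b0 hb0)
      · rw [if_neg h3] at hadj
        rcases Nat.eq_zero_or_pos b with h0 | h0
        · omega
        rcases eq_or_lt_of_le h2 with h5 | h5
        · subst h5; rw [hd] at hadj; exact absurd hadj haj
        · exact absurd hadj ((hmid (i + b) (by omega) (by omega)).2 a0 ha0)
    · by_cases h3 : a = b
      · rw [h3] at hadj; exact absurd hadj (G1.loopless.irrefl _)
      · omega

theorem chordless_path_in_clique_neighbourhood {V : Type*} [Fintype V] [DecidableEq V]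
    (G1 : SimpleGraph V) (hchordal : G1.IsChordalGraph)
    (r1 : Set V) (hclique : G1.IsClique r1)
    (l : ℕ) (hl : 2 ≤ l) (p : Fin (l + 1) → V) (hinj : Function.Injective p)
    (hpath : ∀ i : Fin l, G1.Adj (p i.castSucc) (p i.succ))
    (hchordless : ∀ i j : Fin (l + 1), (i : ℕ) + 1 < (j : ℕ) → ¬ G1.Adj (p i) (p j))
    (hx : p 0 ∈ r1 ∪ G1.nbhdSet r1) (hy : p (Fin.last l) ∈ r1 ∪ G1.nbhdSet r1) :
    ∀ k : Fin (l + 1), p k ∈ r1 ∪ G1.nbhdSet r1 := by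
  classical
  intro k
  by_contra hk
  set v : ℕ → V := fun m => p ⟨m % (l + 1), Nat.mod_lt _ (Nat.succ_pos l)⟩ with hv
  have hveq : ∀ m, (h : m ≤ l) → v m = p ⟨m, by omega⟩ := by
    intro m h
    simp only [hv]
    congr 1
    exact Fin.ext (Nat.mod_eq_of_lt (by omega))
  have hvinj : ∀ a b, a ≤ l → b ≤ l → v a = v b → a = b := by
    intro a b ha hb h
    rw [hveq a ha, hveq b hb] at h
    exact congrArg Fin.val (hinj h)
  have hvadj : ∀ a, a + 1 ≤ l → G1.Adj (v a) (v (a + 1)) := by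
    intro a ha
    rw [hveq a (by omega), hveq (a + 1) ha]
    exact hpath ⟨a, by omega⟩
  have hvchord : ∀ a b, a + 1 < b → b ≤ l → ¬ G1.Adj (v a) (v b) := by
    intro a b h1 h2
    rw [hveq a (by omega), hveq b h2]
    exact hchordless ⟨a, by omega⟩ ⟨b, by omega⟩ (by simpa using h1)
  have hv0 : v 0 ∈ r1 ∪ G1.nbhdSet r1 := by
    rw [hveq 0 (by omega)]
    have : (⟨0, by omega⟩ : Fin (l + 1)) = 0 := by
      ext; simp
    rw [this]; exact hx
  have hvl : v l ∈ r1 ∪ G1.nbhdSet r1 := by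
    rw [hveq l le_rfl]
    have : (⟨l, by omega⟩ : Fin (l + 1)) = Fin.last l := rfl
    rw [this]; exact hy
  have hkl' : (k : ℕ) ≤ l := by omega
  have hvk : v (k : ℕ) ∉ r1 ∪ G1.nbhdSet r1 := by
    rw [hveq (k : ℕ) hkl']
    intro h
    exact hk (by rwa [Fin.eta] at h)
  have hk0 : 0 < (k : ℕ) := by
    rcases Nat.eq_zero_or_pos (k : ℕ) with h | h
    · refine absurd ?_ hvk
      rw [hveq (k : ℕ) hkl']
      have he : (⟨(k : ℕ), by omega⟩ : Fin (l + 1)) = 0 := by ext; simp [h]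
      rw [he]; exact hx
    · exact h
  have hkl : (k : ℕ) < l := by
    rcases eq_or_lt_of_le hkl' with h | h
    · refine absurd ?_ hvk
      rw [hveq (k : ℕ) hkl']
      have he : (⟨(k : ℕ), by omega⟩ : Fin (l + 1)) = Fin.last l := by ext; simp [h]
      rw [he]; exact hy
    · exact h
  -- the first vertex in S strictly after k
  have hexj : ∃ m, (k : ℕ) < m ∧ m ≤ l ∧ v m ∈ r1 ∪ G1.nbhdSet r1 := ⟨l, hkl, le_rfl, hvl⟩
  obtain ⟨hjk, hjl, hjP⟩ := Nat.find_spec hexj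
  have hjmin := fun m (hm : m < Nat.find hexj) => Nat.find_min hexj hm
  set j := Nat.find hexj with hjdef
  -- the last vertex in S weakly before k
  set Q : ℕ → Prop := fun m => v m ∈ r1 ∪ G1.nbhdSet r1 with hQ
  have hiP : Q (Nat.findGreatest Q (k : ℕ)) :=
    Nat.findGreatest_spec (P := Q) (Nat.zero_le _) hv0
  have hile : Nat.findGreatest Q (k : ℕ) ≤ (k : ℕ) := Nat.findGreatest_le _
  have higr := fun m (h1 : Nat.findGreatest Q (k : ℕ) < m) (h2 : m ≤ (k : ℕ)) =>
    Nat.findGreatest_is_greatest (P := Q) h1 h2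
  set i := Nat.findGreatest Q (k : ℕ) with hidef
  have hik : i < (k : ℕ) := by
    rcases eq_or_lt_of_le hile with h | h
    · exact absurd (h ▸ hiP) hvk
    · exact h
  have hmid : ∀ m, i < m → m < j → v m ∉ r1 ∧ ∀ u ∈ r1, ¬ G1.Adj u (v m) := by
    intro m h1 h2
    have hnP : ¬ Q m := by
      by_cases h3 : m ≤ (k : ℕ)
      · exact higr m h1 h3
      · intro hPm
        exact hjmin m h2 ⟨by omega, by omega, hPm⟩
    simp only [hQ, Set.mem_union, SimpleGraph.nbhdSet, Set.mem_setOf_eq] at hnP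
    push_neg at hnP
    exact hnP
  have hij : i + 2 ≤ j := by omega
  have hnonadj : ¬ G1.Adj (v i) (v j) := hvchord i j (by omega) (by omega)
  have hvne : v i ≠ v j := by
    intro h
    have := hvinj i j (by omega) (by omega) h
    omega
  simp only [hQ, Set.mem_union, SimpleGraph.nbhdSet, Set.mem_setOf_eq] at hiP hjP
  by_cases hir : v i ∈ r1 <;> by_cases hjr : v j ∈ r1
  · exact hnonadj (hclique hir hjr hvne)
  · -- v i ∈ r1, v j ∉ r1 : use the clique neighbour of v j
    rcases hjP with h | ⟨b, hbr, hba⟩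
    · exact hjr h
    have hbne : b ≠ v i := by
      intro h
      exact hnonadj (h ▸ hba)
    exact aux_case1 G1 hchordal r1 v i j l hij (by omega) hvinj hvadj hvchord hmid
      b hbr (hclique hbr hir hbne) hba
  · rcases hiP with h | ⟨a, har, haa⟩
    · exact hir h
    have hane : a ≠ v j := by
      intro h
      exact hnonadj (h ▸ haa).symm
    exact aux_case1 G1 hchordal r1 v i j l hij (by omega) hvinj hvadj hvchord hmid
      a har haa (hclique har hjr hane)
  · rcases hiP with h | ⟨a, har, haa⟩
    · exact hir h
    rcases hjP with h | ⟨b, hbr, hba⟩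
    · exact hjr h
    by_cases haj : G1.Adj a (v j)
    · exact aux_case1 G1 hchordal r1 v i j l hij (by omega) hvinj hvadj hvchord hmid
        a har haa haj
    by_cases hbi : G1.Adj b (v i)
    · exact aux_case1 G1 hchordal r1 v i j l hij (by omega) hvinj hvadj hvchord hmid
        b hbr hbi hba
    have hne : a ≠ b := by
      intro h
      exact haj (h ▸ hba)
    exact aux_case2 G1 hchordal r1 v i j l hij (by omega) hvinj hvadj hvchord hmid
      a b har hbr hne haa hba haj hbi hir hjr (hclique har hbr hne)
end
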